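/- With the Euclidean chain conventions (λ_j = 0 for j > l), the translated intervals C̃_i := { x + λ_0 : x ∈ C_i } satisfy C̃_i = [K − λ_{2i−1}, K − λ_{2i+1} − 1] for each i ∈ [0, ⌈l/2⌉], and their union over i is exactly [λ_0, K − 1]. -/

import Mathlib

/-- Euclidean chain: `lam K D 0 = λ_{-1} = D+1`, `lam K D 1 = λ_0 = K-D-1`, and
`lam K D (i+1) = λ_i` is the remainder of `λ_{i-2}` divided by `λ_{i-1}`
(with the convention that once a term is `0`, all later terms are `0`). -/
def lam (K D : ℕ) : ℕ → ℕ
  | 0 => D + 1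
  | 1 => K - D - 1
  | (n + 2) => if lam K D (n + 1) = 0 then 0 else lam K D n % lam K D (n + 1)

/-- The column interval `C_i = [D - λ_{2i-1} + 1, D - λ_{2i+1}]` (as a set of integers);
for `i = 0` this is `[0, β_0 λ_0 - 1]` (empty when `β_0 = 0`), and for `i = ⌈l/2⌉`
it is `[D - λ_{2⌈l/2⌉-1} + 1, D]` since `λ_j = 0` for `j > l`. -/
noncomputable def Cset (K D : ℕ) (i : ℕ) : Finset ℤ :=
  Finset.Icc ((D : ℤ) - lam K D (2*i) + 1) ((D : ℤ) - lam K D (2*i+2))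

lemma lam_zero_of_ge (K D l : ℕ) (hl' : lam K D (l+2) = 0) :
    ∀ m, l + 2 ≤ m → lam K D m = 0 := by
  intro m hm
  induction m with
  | zero => omega
  | succ n ih =>
    rcases Nat.lt_or_ge (l+2) (n+1) with h | h
    · have hn : lam K D n = 0 := ih (by omega)
      obtain ⟨k, rfl⟩ : ∃ k, n = k + 1 := ⟨n - 1, by omega⟩
      simp [lam, hn]
    · have : n + 1 = l + 2 := by omega
      rw [this]; exact hl'

lemma lam_step_le (K D n : ℕ) : lam K D (n + 2) ≤ lam K D n := by
  rw [lam]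
  split
  · exact Nat.zero_le _
  · exact Nat.mod_le _ _

lemma union_Icc (a : ℕ → ℤ) (ha : ∀ i, a i ≤ a (i+1)) (n : ℕ) :
    (Finset.range (n+1)).biUnion (fun i => Finset.Icc (a i) (a (i+1) - 1))
      = Finset.Icc (a 0) (a (n+1) - 1) := by
  have hmono : ∀ i j, i ≤ j → a i ≤ a j := fun i j h =>
    monotone_nat_of_le_succ ha h
  induction n with
  | zero => simp
  | succ n ih =>
    rw [Finset.range_add_one, Finset.biUnion_insert, ih]
    ext x
    simp only [Finset.mem_union, Finset.mem_Icc]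
    have h1 : a 0 ≤ a (n+1) := hmono 0 (n+1) (by omega)
    have h2 : a (n+1) ≤ a (n+1+1) := ha (n+1)
    constructor
    · rintro (h | h) <;> omega
    · intro h
      rcases le_or_gt (a (n+1)) x with h' | h'
      · left; omega
      · right; omega

theorem stmt5 (K D l : ℕ) (hDK : D + 1 < K)
    (hl : lam K D (l + 1) ≠ 0) (hl' : lam K D (l + 2) = 0) :
    (∀ i ≤ (l+1)/2,
      (Cset K D i).image (fun x => x + ((K : ℤ) - D - 1)) =
        Finset.Icc ((K : ℤ) - lam K D (2*i)) ((K : ℤ) - lam K D (2*i+2) - 1)) ∧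
    (Finset.range ((l+1)/2 + 1)).biUnion
        (fun i => (Cset K D i).image (fun x => x + ((K : ℤ) - D - 1)))
      = Finset.Icc ((K : ℤ) - D - 1) ((K : ℤ) - 1) := by
  have himg : ∀ i : ℕ,
      (Cset K D i).image (fun x => x + ((K : ℤ) - D - 1)) =
        Finset.Icc ((K : ℤ) - lam K D (2*i)) ((K : ℤ) - lam K D (2*i+2) - 1) := by
    intro i
    rw [Cset, Finset.image_add_right_Icc]
    congr 1 <;> ring
  refine ⟨fun i _ => himg i, ?_⟩
  have hkey := union_Icc (fun i => (K : ℤ) - lam K D (2*i))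
    (by
      intro i
      have h := lam_step_le K D (2*i)
      have he : 2*(i+1) = 2*i + 2 := by ring
      show (K : ℤ) - lam K D (2*i) ≤ (K : ℤ) - lam K D (2*(i+1))
      rw [he]
      push_cast
      omega) ((l+1)/2)
  have hrw : ∀ i : ℕ, (K : ℤ) - lam K D (2*(i+1)) - 1 = (K : ℤ) - lam K D (2*i+2) - 1 := by
    intro i
    have he : 2*(i+1) = 2*i + 2 := by ring
    rw [he]
  calc (Finset.range ((l+1)/2 + 1)).biUnion
        (fun i => (Cset K D i).image (fun x => x + ((K : ℤ) - D - 1)))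
      = (Finset.range ((l+1)/2 + 1)).biUnion
        (fun i => Finset.Icc ((K : ℤ) - lam K D (2*i)) ((K : ℤ) - lam K D (2*(i+1)) - 1)) := by
        apply Finset.biUnion_congr rfl
        intro i _
        rw [himg i, hrw i]
    _ = Finset.Icc ((K : ℤ) - lam K D 0) ((K : ℤ) - lam K D (2*((l+1)/2 + 1)) - 1) := by
        simpa using hkey
    _ = Finset.Icc ((K : ℤ) - D - 1) ((K : ℤ) - 1) := by
        have h0 : lam K D 0 = D + 1 := rfl
        have h1 : lam K D (2*((l+1)/2 + 1)) = 0 :=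
          lam_zero_of_ge K D l hl' _ (by omega)
        rw [h0, h1]
        norm_num
        congr 1
        push_cast
        ring
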